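/- arXiv:2310.01325 — 3 statements merged into one kernel-verified Lean document; each statement's English description precedes it below -/
import Mathlib

section
/- Assume there exists an integer n_0 such that D⁺_n > 1 for every integer n > n_0 (in particular, this follows if ω(D⁺_n) ~ κ·√n/log n as n → ∞ for some constant κ > 1). Then the set {n ≥ 1 : B'_n(x) ∈ ℤ[x]} of indices whose Bernoulli polynomial derivative has only integral coefficients is finite. -/
/-- A rational polynomial has only integral coefficients. -/
def IsIntPoly (f : Polynomial ℚ) : Prop := ∀ i, (f.coeff i).den = 1

/-- The least positive integer `d` such that `d • f` has only integral coefficients. -/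
noncomputable def polyDenom (f : Polynomial ℚ) : ℕ :=
  sInf {d : ℕ | 0 < d ∧ IsIntPoly ((d : ℚ) • f)}

/-- Sum of base-`p` digits of `n`. -/
def sd (p n : ℕ) : ℕ := (Nat.digits p n).sum

/-- Radical (squarefree kernel) of `n`. -/
def rad (n : ℕ) : ℕ := ∏ p ∈ n.primeFactors, p

/-- `D n = denom (B_n(x) - B_n)`. -/
noncomputable def D (n : ℕ) : ℕ :=
  polyDenom (Polynomial.bernoulli n - Polynomial.C (bernoulli n))

/-- `DB n = denom (B_n(x))`. -/
noncomputable def DB (n : ℕ) : ℕ := polyDenom (Polynomial.bernoulli n)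

/-- `D̂ n`: product of primes `p` with `p ∤ n` and `s_p(n) ≥ p`.
(Any such prime satisfies `p ≤ s_p(n) ≤ n`.) -/
def Dhat (n : ℕ) : ℕ :=
  ∏ p ∈ (Finset.range (n + 1)).filter (fun p => p.Prime ∧ ¬ p ∣ n ∧ p ≤ sd p n), p

/-- `D̃ n`: product of primes `p` with `p ∣ n` and `s_p(n) ≥ p`. -/
def Dtilde (n : ℕ) : ℕ :=
  ∏ p ∈ (Finset.range (n + 1)).filter (fun p => p.Prime ∧ p ∣ n ∧ p ≤ sd p n), p

/-- `Ď n`: product of primes `p` with `p ∣ n` and `s_p(n) < p`. -/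
def Dcheck (n : ℕ) : ℕ :=
  ∏ p ∈ (Finset.range (n + 1)).filter (fun p => p.Prime ∧ p ∣ n ∧ sd p n < p), p

/-- `D⁺ n`: product of primes `p` with `p > √n` and `s_p(n) ≥ p`. -/
def Dplus (n : ℕ) : ℕ :=
  ∏ p ∈ (Finset.range (n + 1)).filter (fun p => p.Prime ∧ n < p ^ 2 ∧ p ≤ sd p n), p

/-- The sum-of-powers polynomial `S_n(x) = (B_{n+1}(x) - B_{n+1}) / (n+1)`. -/
noncomputable def Spoly (n : ℕ) : Polynomial ℚ :=
  Polynomial.C (((n : ℚ) + 1)⁻¹) *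
    (Polynomial.bernoulli (n + 1) - Polynomial.C (bernoulli (n + 1)))

section StmtTenAux

open Finset

variable {p : ℕ} [hp : Fact p.Prime]

lemma normNatLe (N : ℕ) : ‖(N : ℚ_[p])‖ ≤ 1 := by
  simpa using Padic.norm_int_le_one (p := p) (N : ℤ)

lemma normNatEq {N : ℕ} (h : ¬ p ∣ N) : ‖(N : ℚ_[p])‖ = 1 := by
  refine le_antisymm (normNatLe N) ?_
  by_contra hlt
  push_neg at hlt
  have := (Padic.norm_intCast_lt_one_iff (p := p) (k := (N : ℤ))).1 (by simpa using hlt)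
  exact h (by exact_mod_cast this)

lemma normRatLe {q : ℚ} (h : ¬ p ∣ q.den) : ‖(q : ℚ_[p])‖ ≤ 1 := by
  rw [Rat.cast_def, norm_div]
  have hd : ‖((q.den : ℕ) : ℚ_[p])‖ = 1 := normNatEq h
  rw [hd, div_one]
  exact Padic.norm_int_le_one (p := p) q.num

lemma pow_div_norm {j : ℕ} (hj : 2 ≤ j) (hp3 : 3 ≤ p) :
    ‖(p : ℚ_[p]) ^ (j - 1) / (j : ℚ_[p])‖ ≤ (p : ℝ)⁻¹ := by
  have hj0 : j ≠ 0 := by omega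
  set v := j.factorization p with hv
  have hvj : v + 2 ≤ j := by
    have h1 : p ^ v ≤ j := Nat.ordProj_le p hj0
    have h2 : 3 ^ v ≤ p ^ v := Nat.pow_le_pow_left hp3 v
    rcases Nat.eq_zero_or_pos v with h | h
    · omega
    · have h3 : v < 3 ^ v := Nat.lt_pow_self (by norm_num)
      have h4 : 3 ^ (v - 1) * 3 = 3 ^ v := by
        rw [← pow_succ]; congr 1; omega
      have h5 : v - 1 < 3 ^ (v - 1) := Nat.lt_pow_self (by norm_num)
      omega
  have hsplit : (j : ℚ_[p]) = (p : ℚ_[p]) ^ v * ((j / p ^ v : ℕ) : ℚ_[p]) := by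
    rw [← Nat.cast_pow, ← Nat.cast_mul, Nat.ordProj_mul_ordCompl_eq_self j p]
  have hu : ‖((j / p ^ v : ℕ) : ℚ_[p])‖ = 1 :=
    normNatEq (Nat.not_dvd_ordCompl hp.out hj0)
  rw [norm_div, hsplit, norm_mul, hu, mul_one, norm_pow, norm_pow, Padic.norm_p]
  have hp0 : (0:ℝ) < p := by positivity
  have hp1 : (1:ℝ) ≤ p := by exact_mod_cast hp.out.one_le
  have e1 : ((p:ℝ)⁻¹)^(j-1) / ((p:ℝ)⁻¹)^v = ((p:ℝ)^v) / (p:ℝ)^(j-1) := by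
    rw [inv_pow, inv_pow]; field_simp
  rw [e1, div_le_iff₀ (by positivity)]
  have e2 : (p:ℝ)⁻¹ * (p:ℝ)^(j-1) = (p:ℝ)^(j-2) := by
    rw [show j - 2 = j - 1 - 1 by omega, pow_sub₀ _ (by positivity) (by omega : 1 ≤ j - 1),
      pow_one]
    ring
  rw [e2]
  exact pow_le_pow_right₀ hp1 (by omega)

lemma qdecomp (m : ℕ) :
    (p : ℚ) * _root_.bernoulli m =
      (∑ k ∈ range p, (k : ℚ) ^ m) -
      ∑ i ∈ range m, ((p : ℚ) * _root_.bernoulli i) * ((m.choose i : ℕ) : ℚ) *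
        ((p : ℚ) ^ (m - i) / ((m + 1 - i : ℕ) : ℚ)) := by
  have key := sum_range_pow p m
  rw [Finset.sum_range_succ] at key
  have hm1 : ((m : ℚ) + 1) ≠ 0 := by positivity
  have hlast : _root_.bernoulli m * ((m+1).choose m : ℚ) * (p:ℚ)^(m+1-m) / ((m:ℚ)+1)
      = (p:ℚ) * _root_.bernoulli m := by
    rw [Nat.choose_succ_self_right, show m+1-m = 1 by omega, pow_one]
    push_cast
    field_simp
  rw [hlast] at key
  have hterm : ∀ i ∈ range m,
      _root_.bernoulli i * ((m+1).choose i : ℚ) * (p:ℚ)^(m+1-i) / ((m:ℚ)+1)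
      = ((p : ℚ) * _root_.bernoulli i) * ((m.choose i : ℕ) : ℚ) *
        ((p : ℚ) ^ (m - i) / ((m + 1 - i : ℕ) : ℚ)) := by
    intro i hi
    rw [Finset.mem_range] at hi
    have hc : (m.choose i : ℚ) * ((m:ℚ)+1) = ((m+1).choose i : ℚ) * ((m+1-i : ℕ) : ℚ) := by
      exact_mod_cast congrArg (Nat.cast (R := ℚ)) (Nat.choose_mul_succ_eq m i)
    have hi2 : ((m + 1 - i : ℕ) : ℚ) ≠ 0 := by
      have : 0 < m + 1 - i := by omega
      positivity
    have hrw : m+1-i = (m-i)+1 := by omega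
    rw [hrw] at hc hi2 ⊢
    rw [pow_succ]
    set A : ℚ := ((m:ℚ)+1) with hA
    set B : ℚ := ((m-i+1 : ℕ) : ℚ) with hB
    set C1 : ℚ := ((m+1).choose i : ℚ) with hC1
    set C0 : ℚ := ((m.choose i : ℕ) : ℚ) with hC0
    field_simp
    linear_combination (_root_.bernoulli i * (p:ℚ) * (p:ℚ)^(m-i)) * C0 * hA - (_root_.bernoulli i * (p:ℚ) * (p:ℚ)^(m-i)) * hc
  rw [Finset.sum_congr rfl hterm] at key
  linarith [key]

noncomputable def Bq (m : ℕ) : ℚ_[p] := ((_root_.bernoulli m : ℚ) : ℚ_[p])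

lemma padic_decomp (hp3 : 3 ≤ p) (m : ℕ)
    (IH : ∀ i, i < m → ‖(p : ℚ_[p]) * Bq i‖ ≤ 1) :
    ∃ S : ℚ_[p], ‖S‖ ≤ (p:ℝ)⁻¹ ∧
      (p : ℚ_[p]) * Bq m = (((∑ k ∈ range p, k ^ m : ℕ) : ℚ_[p])) - S := by
  have key := congrArg (fun q : ℚ => (q : ℚ_[p])) (qdecomp (p := p) m)
  simp only [Rat.cast_sub, Rat.cast_mul, Rat.cast_natCast, Rat.cast_sum, Rat.cast_pow,
    Rat.cast_div] at key
  refine ⟨∑ i ∈ range m, ((p : ℚ_[p]) * Bq i) * ((m.choose i : ℕ) : ℚ_[p]) *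
      ((p:ℚ_[p])^(m-i) / ((m+1-i:ℕ):ℚ_[p])), ?_, ?_⟩
  swap
  · rw [show ((∑ k ∈ range p, k ^ m : ℕ) : ℚ_[p]) = ∑ k ∈ range p, ((k:ℚ_[p])) ^ m by
      push_cast; ring]
    exact key
  · apply IsUltrametricDist.norm_sum_le_of_forall_le_of_nonneg (by positivity)
    intro i hi
    rw [Finset.mem_range] at hi
    have h1 : ‖(p : ℚ_[p]) * Bq i‖ ≤ 1 := IH i hi
    have h2 : ‖((m.choose i : ℕ) : ℚ_[p])‖ ≤ 1 := normNatLe _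
    have h3 : ‖(p : ℚ_[p]) ^ (m - i) / ((m + 1 - i : ℕ) : ℚ_[p])‖ ≤ (p:ℝ)⁻¹ := by
      have := pow_div_norm (p := p) (j := m + 1 - i) (by omega) hp3
      rw [show m + 1 - i - 1 = m - i by omega] at this
      exact this
    calc ‖(p : ℚ_[p]) * Bq i * ((m.choose i : ℕ) : ℚ_[p]) *
          ((p : ℚ_[p]) ^ (m - i) / ((m + 1 - i : ℕ) : ℚ_[p]))‖
        = ‖(p : ℚ_[p]) * Bq i‖ * ‖((m.choose i : ℕ) : ℚ_[p])‖ *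
          ‖(p : ℚ_[p]) ^ (m - i) / ((m + 1 - i : ℕ) : ℚ_[p])‖ := by
          rw [norm_mul, norm_mul]
      _ ≤ 1 * 1 * (p:ℝ)⁻¹ :=
          mul_le_mul (mul_le_mul h1 h2 (norm_nonneg _) zero_le_one) h3 (norm_nonneg _)
            (by norm_num)
      _ = (p:ℝ)⁻¹ := by ring

lemma norm_p_mul_B_le_one (hp3 : 3 ≤ p) : ∀ m : ℕ, ‖(p : ℚ_[p]) * Bq m‖ ≤ 1 := by
  intro m
  induction m using Nat.strong_induction_on with
  | _ m IH =>
    obtain ⟨S, hS, hEq⟩ := padic_decomp hp3 m IH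
    rw [hEq, sub_eq_add_neg]
    refine (IsUltrametricDist.norm_add_le_max _ _).trans (max_le (normNatLe _) ?_)
    rw [norm_neg]
    refine hS.trans ?_
    rw [inv_le_one_iff₀]; right; exact_mod_cast by omega

lemma sum_pow_not_dvd (hp3 : 3 ≤ p) {m : ℕ} (hm : m ≠ 0) (hd : (p - 1) ∣ m) :
    ¬ p ∣ (∑ k ∈ range p, k ^ m) := by
  intro hdvd
  have hone : ∀ k ∈ Finset.Ico 1 p, ((k : ZMod p)) ^ m = 1 := by
    intro k hk
    rw [Finset.mem_Ico] at hk
    have hk0 : ((k : ZMod p)) ≠ 0 := by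
      rw [Ne, ZMod.natCast_eq_zero_iff]
      intro hpk
      have := Nat.le_of_dvd (by omega) hpk
      omega
    obtain ⟨t, rfl⟩ := hd
    rw [pow_mul, ZMod.pow_card_sub_one_eq_one hk0, one_pow]
  have hcast : ((∑ k ∈ range p, k ^ m : ℕ) : ZMod p) = ((p - 1 : ℕ) : ZMod p) := by
    push_cast
    rw [Finset.range_eq_Ico, Finset.sum_eq_sum_Ico_succ_bot (by omega : 0 < p),
      Nat.cast_zero, zero_pow hm, zero_add, Finset.sum_congr rfl hone, Finset.sum_const,
      Nat.card_Ico, nsmul_eq_mul, mul_one]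
  rw [(ZMod.natCast_eq_zero_iff _ _).2 hdvd] at hcast
  have : p ∣ (p - 1) := (ZMod.natCast_eq_zero_iff _ _).1 hcast.symm
  have := Nat.le_of_dvd (by omega) this
  omega

lemma one_lt_norm_B (hp3 : 3 ≤ p) {m : ℕ} (hm : m ≠ 0) (hd : (p - 1) ∣ m) :
    1 < ‖(Bq m : ℚ_[p])‖ := by
  obtain ⟨S, hS, hEq⟩ := padic_decomp hp3 m (fun i _ => norm_p_mul_B_le_one hp3 i)
  have hT : ‖((∑ k ∈ range p, k ^ m : ℕ) : ℚ_[p])‖ = 1 :=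
    normNatEq (sum_pow_not_dvd hp3 hm hd)
  have hp0 : (0:ℝ) < p := by positivity
  have hp1 : (1:ℝ) < p := by exact_mod_cast by omega
  have hlow : 1 - (p:ℝ)⁻¹ ≤ ‖(p : ℚ_[p]) * Bq m‖ := by
    calc 1 - (p:ℝ)⁻¹ ≤ ‖((∑ k ∈ range p, k ^ m : ℕ) : ℚ_[p])‖ - ‖S‖ := by
          rw [hT]; linarith
      _ ≤ ‖((∑ k ∈ range p, k ^ m : ℕ) : ℚ_[p]) - S‖ := by
          have := norm_sub_norm_le ((((∑ k ∈ range p, k ^ m : ℕ) : ℚ_[p]))) S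
          linarith [this]
      _ = ‖(p : ℚ_[p]) * Bq m‖ := by rw [hEq]
  rw [norm_mul, Padic.norm_p] at hlow
  -- ‖Bq m‖ ≥ p (1 - p⁻¹) = p - 1 ≥ 2 > 1
  have h2 : (p:ℝ) - 1 ≤ ‖(Bq m : ℚ_[p])‖ := by
    have hinv : (0:ℝ) < (p:ℝ)⁻¹ := by positivity
    have := mul_le_mul_of_nonneg_left hlow (le_of_lt hp0)
    rw [← mul_assoc, mul_inv_cancel₀ (ne_of_gt hp0), one_mul] at this
    calc (p:ℝ) - 1 = (p:ℝ) * (1 - (p:ℝ)⁻¹) := by field_simp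
      _ ≤ _ := this
  have : (2:ℝ) ≤ (p:ℝ) - 1 := by
    have : (3:ℝ) ≤ (p:ℝ) := by exact_mod_cast hp3
    linarith
  linarith

end StmtTenAux

section StmtTenAux2

open Finset

lemma coeff_bernoulli_poly (N k : ℕ) (h : k ≤ N) :
    (Polynomial.bernoulli N).coeff k = _root_.bernoulli (N - k) * (N.choose k) := by
  rw [Polynomial.bernoulli_def, Polynomial.finset_sum_coeff]
  simp only [Polynomial.coeff_monomial]
  rw [Finset.sum_ite_eq' (Finset.range (N + 1)) k
    (fun i => _root_.bernoulli (N - i) * (N.choose i : ℚ)), if_pos (by simp; omega)]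

lemma sd_le {p n : ℕ} (hp2 : 2 ≤ p) (hn2 : n < p ^ 2) : sd p n ≤ n % p + n / p := by
  rcases Nat.eq_zero_or_pos n with rfl | hn0
  · simp [sd]
  rw [sd, Nat.digits_def' (by omega : 1 < p) hn0]
  simp only [List.sum_cons]
  rcases Nat.eq_zero_or_pos (n / p) with h | h
  · rw [h]; simp
  · rw [Nat.digits_def' (by omega : 1 < p) h]
    have hlt : n / p < p := Nat.div_lt_of_lt_mul (by rw [← pow_two]; exact hn2)
    rw [Nat.mod_eq_of_lt hlt, Nat.div_eq_of_lt hlt]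
    simp

-- main contradiction lemma

lemma not_int_poly {n p : ℕ} (hpp : p.Prime) (hp3 : 3 ≤ p) (hn2 : n < p ^ 2)
    (hsd : p ≤ sd p n) : ¬ IsIntPoly (Polynomial.derivative (Polynomial.bernoulli n)) := by
  haveI : Fact p.Prime := ⟨hpp⟩
  intro hint
  set a := n / p with ha
  set b := n % p with hb
  have hab : p * a + b = n := Nat.div_add_mod n p
  have hbp : b < p := Nat.mod_lt _ (by omega)
  have hap : a < p := Nat.div_lt_of_lt_mul (by rw [← pow_two]; exact hn2)
  have habp : p ≤ a + b := le_trans hsd (by have := sd_le (by omega) hn2; omega)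
  have hb1 : 1 ≤ b := by omega
  have ha1 : 1 ≤ a := by omega
  set c := p - 1 - a with hc
  set d := b - 1 - c with hd
  have hcd : c + 1 ≤ b := by omega
  -- m and its base-p expansion
  set m := (a + 1) * (p - 1) with hm
  have hm2 : m = p * a + c := by
    have h1 : p - 1 = a + c := by omega
    have h2 : p = a + 1 + c := by omega
    rw [hm, h1, h2]; ring
  have hmn : m + d + 1 = n := by omega
  set N := n - 1 with hN
  have hNmd : N = m + d := by omega
  have hm0 : m ≠ 0 := by
    have := Nat.mul_pos (show 0 < a + 1 by omega) (show 0 < p - 1 by omega)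
    omega
  -- p does not divide n
  have hpn : ¬ p ∣ n := by
    intro hdvd
    rcases hdvd with ⟨t, rfl⟩
    have h0 : p * t % p = 0 := Nat.mul_mod_right p t
    omega
  -- p does not divide choose N m  (Kummer)
  have hpc : ¬ p ∣ N.choose m := by
    have hlog : Nat.log p N < 2 := Nat.log_lt_of_lt_pow (by omega) (by omega)
    have hkum := Nat.Prime.emultiplicity_choose hpp (k := m) (n := N) (b := 2)
      (by omega) hlog
    have hfe : ({i ∈ Finset.Ico 1 2 | p ^ i ≤ m % p ^ i + (N - m) % p ^ i} : Finset ℕ)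
        = ∅ := by
      rw [Finset.eq_empty_iff_forall_notMem]
      intro i hi
      simp only [Finset.mem_filter, Finset.mem_Ico] at hi
      obtain ⟨⟨h1, h2⟩, h3⟩ := hi
      have hi1 : i = 1 := by omega
      subst hi1
      rw [pow_one] at h3
      have hmp : m % p = c := by
        rw [hm2, Nat.mul_add_mod, Nat.mod_eq_of_lt (by omega)]
      have hNm : N - m = d := by omega
      have hdp : d % p = d := Nat.mod_eq_of_lt (by omega)
      rw [hmp, hNm, hdp] at h3
      omega
    rw [hfe] at hkum
    simp only [Finset.card_empty, Nat.cast_zero] at hkum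
    exact fun hdvd => by
      have := emultiplicity_eq_zero.1 hkum
      exact this hdvd
  -- compute the coefficient at index d
  have hdN : d ≤ N := by omega
  have hq : (Polynomial.derivative (Polynomial.bernoulli n)).coeff d
      = (n : ℚ) * (_root_.bernoulli m * (N.choose m : ℕ)) := by
    rw [Polynomial.derivative_bernoulli n, ← Polynomial.C_eq_natCast, Polynomial.coeff_C_mul,
      show n - 1 = N from rfl, coeff_bernoulli_poly N d hdN,
      show N - d = m by omega, show d = N - m by omega, Nat.choose_symm (by omega : m ≤ N)]
  set q : ℚ := (Polynomial.derivative (Polynomial.bernoulli n)).coeff d with hqdef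
  have hden : q.den = 1 := hint d
  have hle : ‖(q : ℚ_[p])‖ ≤ 1 := by
    apply normRatLe
    rw [hden, Nat.dvd_one]
    omega
  have hcast : ((q : ℚ) : ℚ_[p])
      = (n : ℚ_[p]) * (((_root_.bernoulli m : ℚ) : ℚ_[p]) * ((N.choose m : ℕ) : ℚ_[p])) := by
    rw [hq]
    push_cast
    ring
  have hnn : ‖(n : ℚ_[p])‖ = 1 := normNatEq hpn
  have hcc : ‖((N.choose m : ℕ) : ℚ_[p])‖ = 1 := normNatEq hpc
  have hbb : 1 < ‖((_root_.bernoulli m : ℚ) : ℚ_[p])‖ :=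
    one_lt_norm_B hp3 hm0 (dvd_mul_left (p - 1) (a + 1))
  rw [hcast, norm_mul, norm_mul, hnn, hcc, one_mul, mul_one] at hle
  linarith

end StmtTenAux2

/-- If there is `n₀` with `D⁺ n > 1` for all `n > n₀`, then
the set of `n ≥ 1` with `B'_n(x) ∈ ℤ[x]` is finite. -/
theorem stmt_10 (h : ∃ n₀ : ℕ, ∀ n : ℕ, n₀ < n → 1 < Dplus n) :
    Set.Finite {n : ℕ | 1 ≤ n ∧
      IsIntPoly (Polynomial.derivative (Polynomial.bernoulli n))} := by

  obtain ⟨n₀, h⟩ := h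
  apply Set.Finite.subset (Set.finite_Iic (max n₀ 3))
  rintro n ⟨hn1, hint⟩
  by_contra hgt
  rw [Set.mem_Iic, not_le] at hgt
  have hn3 : 3 < n := lt_of_le_of_lt (le_max_right _ _) hgt
  have hD := h n (lt_of_le_of_lt (le_max_left _ _) hgt)
  have hne : ((Finset.range (n + 1)).filter
      (fun p => p.Prime ∧ n < p ^ 2 ∧ p ≤ sd p n)).Nonempty := by
    by_contra hemp
    rw [Finset.not_nonempty_iff_eq_empty] at hemp
    unfold Dplus at hD
    rw [hemp, Finset.prod_empty] at hD
    omega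
  obtain ⟨p, hp⟩ := hne
  rw [Finset.mem_filter] at hp
  obtain ⟨-, hpp, hn2, hsd⟩ := hp
  have hp3 : 3 ≤ p := by
    rcases hpp.two_le.lt_or_eq with h2 | h2
    · omega
    · exfalso; rw [← h2] at hn2; omega
  exact not_int_poly hpp hp3 hn2 hsd hint
end

section
/- Let n, k ≥ 1 be integers. If ω(D⁺_n) ≥ 2k, then D⁺_n > (n+1)(n+2)···(n+k) = (n+k)!/n!. -/


lemma prod_distinct_ge (c : ℕ) : ∀ (S : Finset ℕ) (a : ℕ), S.card = c → (∀ x ∈ S, a ≤ x) →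
    ∏ i ∈ Finset.range c, (a + i) ≤ ∏ x ∈ S, x := by
  induction c with
  | zero =>
    intro S a hc _
    rw [Finset.card_eq_zero.mp hc]
    simp
  | succ c ih =>
    intro S a hc h
    have hne : S.Nonempty := Finset.card_pos.mp (by omega)
    set M := S.max' hne with hMdef
    have hM : M ∈ S := S.max'_mem hne
    have hsub : S ⊆ Finset.Icc a M := fun x hx => Finset.mem_Icc.mpr ⟨h x hx, S.le_max' x hx⟩
    have hcard : S.card ≤ M + 1 - a := by
      simpa [Nat.card_Icc] using Finset.card_le_card hsub
    have haM : a ≤ M := h M hM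
    have hMge : a + c ≤ M := by omega
    have herase : (S.erase M).card = c := by simp [Finset.card_erase_of_mem hM, hc]
    calc ∏ i ∈ Finset.range (c+1), (a+i)
        = (∏ i ∈ Finset.range c, (a+i)) * (a+c) := Finset.prod_range_succ _ _
      _ ≤ (∏ x ∈ S.erase M, x) * M :=
          Nat.mul_le_mul (ih _ a herase (fun x hx => h x (Finset.mem_of_mem_erase hx))) hMge
      _ = ∏ x ∈ S, x := Finset.prod_erase_mul S _ hM

lemma pair_prod_lt (n m : ℕ) (hnm : n < (m+1)^2) (k : ℕ) (hk : 1 ≤ k) :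
    ∏ j ∈ Finset.Icc 1 k, (n+j) < ∏ i ∈ Finset.range (2*k), (m+1+i) := by
  induction k with
  | zero => omega
  | succ k ih =>
    by_cases hk0 : k = 0
    · subst hk0
      simp only [Finset.Icc_self, Finset.prod_singleton]
      rw [show 2*1 = 2 by ring]
      rw [Finset.prod_range_succ, Finset.prod_range_succ, Finset.prod_range_zero]
      nlinarith
    · have ih' := ih (by omega)
      rw [Finset.prod_Icc_succ_top (by omega : 1 ≤ k+1),
        show 2*(k+1) = 2*k+1+1 by ring, Finset.prod_range_succ, Finset.prod_range_succ,
        mul_assoc]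
      have key : n + (k+1) < (m+1+2*k) * (m+1+(2*k+1)) := by nlinarith
      exact Nat.mul_lt_mul'' ih' key


/-- For `n, k ≥ 1`, if `ω(D⁺ n) ≥ 2k` then
`D⁺ n > (n+1)(n+2)⋯(n+k)`. -/
theorem stmt_13 (n k : ℕ) (hn : 1 ≤ n) (hk : 1 ≤ k)
    (h : 2 * k ≤ (Dplus n).primeFactors.card) :
    ∏ i ∈ Finset.Icc 1 k, (n + i) < Dplus n := by
  simp only [Dplus, sd] at h ⊢
  set T := (Finset.range (n + 1)).filter
    (fun p => p.Prime ∧ n < p ^ 2 ∧ p ≤ (Nat.digits p n).sum) with hTdef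
  have hT : ∀ p ∈ T, p.Prime := fun p hp => (Finset.mem_filter.mp hp).2.1
  replace h : 2 * k ≤ (∏ p ∈ T, p).primeFactors.card := h
  rw [Nat.primeFactors_prod hT] at h
  obtain ⟨S, hS, hScard⟩ := Finset.exists_subset_card_eq h
  have hbound : ∀ p ∈ S, n.sqrt + 1 ≤ p := by
    intro p hp
    exact Nat.sqrt_lt'.mpr (Finset.mem_filter.mp (hS hp)).2.2.1
  calc ∏ j ∈ Finset.Icc 1 k, (n+j)
      < ∏ i ∈ Finset.range (2*k), (n.sqrt+1+i) :=
        pair_prod_lt n n.sqrt (Nat.lt_succ_sqrt' n) k hk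
    _ ≤ ∏ p ∈ S, p := prod_distinct_ge (2*k) S (n.sqrt+1) hScard hbound
    _ ≤ ∏ p ∈ T, p := Finset.prod_le_prod_of_subset_of_one_le' hS
        (fun p hp _ => (hT p hp).one_lt.le)
end

section
/- Assume that the set of odd integers n ≥ 1 with D_n = rad(n+1) equals {3, 5, 9, 11, 27, 29, 35, 59}. Then the set {n ≥ 1 : B'_n(x) ∈ ℤ[x]} equals {1, 2, 4, 6, 10, 12, 28, 30, 36, 60}; in particular, it is finite. -/
namespace S16

open Finset


variable {p : ℕ} [hp : Fact p.Prime]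

lemma norm_nat_le_one (n : ℕ) : ‖(n : ℚ_[p])‖ ≤ 1 := by
  have := Padic.norm_int_le_one (p := p) (n : ℤ)
  simpa using this

lemma norm_nat_eq_one_of_not_dvd {n : ℕ} (h : ¬ p ∣ n) : ‖(n : ℚ_[p])‖ = 1 := by
  refine le_antisymm (norm_nat_le_one n) ?_
  by_contra hlt
  push_neg at hlt
  have h2 : ‖((n : ℤ) : ℚ_[p])‖ < 1 := by simpa using hlt
  rw [Padic.norm_intCast_lt_one_iff] at h2
  exact h (by exact_mod_cast h2)

lemma norm_nat_eq (n : ℕ) (hn : n ≠ 0) :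
    ‖(n : ℚ_[p])‖ = (p : ℝ) ^ (-(padicValNat p n : ℤ)) := by
  have hfac : n.factorization p = padicValNat p n := Nat.factorization_def n hp.out
  have hcompl : ¬ p ∣ (n / p ^ n.factorization p) := Nat.not_dvd_ordCompl hp.out hn
  conv_lhs => rw [← Nat.ordProj_mul_ordCompl_eq_self n p]
  push_cast
  rw [norm_mul, norm_pow, Padic.norm_p, norm_nat_eq_one_of_not_dvd hcompl, mul_one,
    inv_pow, ← zpow_natCast, ← zpow_neg, hfac]
  norm_cast

lemma padicValNat_succ_le (k : ℕ) : padicValNat p (k + 1) ≤ k := by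
  have h1 : p ^ (padicValNat p (k+1)) ≤ k + 1 :=
    Nat.le_of_dvd (by omega) pow_padicValNat_dvd
  have h2 : k + 1 < p ^ (k + 1) := Nat.lt_pow_self (n := k + 1) hp.out.one_lt
  have := lt_of_le_of_lt h1 h2
  have := (Nat.pow_lt_pow_iff_right hp.out.one_lt).1 this
  omega

lemma succ_lt_pow {k : ℕ} (hk : 1 ≤ k) (h : 2 ≤ k ∨ 3 ≤ p) : k + 1 < p ^ k := by
  rcases h with h | h
  · have h2 : ∀ m : ℕ, 2 ≤ m → m + 1 < 2 ^ m := by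
      intro m hm
      induction m, hm using Nat.le_induction with
      | base => norm_num
      | succ i hi ih => have h1 : 1 ≤ 2 ^ i := Nat.one_le_two_pow; rw [pow_succ]; omega
    calc k + 1 < 2 ^ k := h2 k h
    _ ≤ p ^ k := Nat.pow_le_pow_left hp.out.two_le k
  · have h3 : ∀ m : ℕ, 1 ≤ m → m + 1 < 3 ^ m := by
      intro m hm
      induction m, hm using Nat.le_induction with
      | base => norm_num
      | succ i hi ih => have h1 : 1 ≤ 3 ^ i := Nat.one_le_pow _ _ (by norm_num); rw [pow_succ]; omega
    calc k + 1 < 3 ^ k := h3 k hk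
    _ ≤ p ^ k := Nat.pow_le_pow_left h k

lemma padicValNat_succ_lt {k : ℕ} (hk : 1 ≤ k) (h : 2 ≤ k ∨ 3 ≤ p) :
    padicValNat p (k + 1) < k := by
  have h1 : p ^ (padicValNat p (k+1)) ≤ k + 1 :=
    Nat.le_of_dvd (by omega) pow_padicValNat_dvd
  have h2 := lt_of_le_of_lt h1 (succ_lt_pow hk h)
  exact (Nat.pow_lt_pow_iff_right hp.out.one_lt).1 h2

lemma norm_frac_eq (k : ℕ) :
    ‖(p : ℚ_[p]) ^ k / ((k + 1 : ℕ) : ℚ_[p])‖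
      = (p : ℝ) ^ ((padicValNat p (k+1) : ℤ) - k) := by
  have hp1 : (1 : ℝ) < p := by exact_mod_cast hp.out.one_lt
  have hp0 : (p : ℝ) ≠ 0 := by positivity
  rw [norm_div, norm_pow, Padic.norm_p, norm_nat_eq (k+1) (by omega),
    inv_pow, ← zpow_natCast, ← zpow_neg, ← zpow_sub₀ hp0]
  ring_nf

lemma norm_frac_le (k : ℕ) :
    ‖(p : ℚ_[p]) ^ k / ((k + 1 : ℕ) : ℚ_[p])‖ ≤ 1 := by
  have hp1 : (1 : ℝ) ≤ p := by exact_mod_cast hp.out.one_le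
  rw [norm_frac_eq]
  have := padicValNat_succ_le (p := p) k
  calc (p:ℝ) ^ ((padicValNat p (k+1) : ℤ) - k) ≤ (p:ℝ) ^ (0:ℤ) := by
        apply zpow_le_zpow_right₀ hp1; omega
  _ = 1 := by norm_num

lemma norm_frac_le_inv {k : ℕ} (hk : 1 ≤ k) (h : 2 ≤ k ∨ 3 ≤ p) :
    ‖(p : ℚ_[p]) ^ k / ((k + 1 : ℕ) : ℚ_[p])‖ ≤ (p : ℝ)⁻¹ := by
  have hp1 : (1 : ℝ) ≤ p := by exact_mod_cast hp.out.one_le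
  rw [norm_frac_eq]
  have := padicValNat_succ_lt hk h
  calc (p:ℝ) ^ ((padicValNat p (k+1) : ℤ) - k) ≤ (p:ℝ) ^ (-1:ℤ) := by
        apply zpow_le_zpow_right₀ hp1; omega
  _ = (p:ℝ)⁻¹ := by norm_num

lemma le_norm_of_pow_dvd_den {q : ℚ} {j : ℕ} (hj : 1 ≤ j) (h : p ^ j ∣ q.den) :
    (p : ℝ) ^ (j : ℤ) ≤ ‖(q : ℚ_[p])‖ := by
  have hp1 : (1 : ℝ) < p := by exact_mod_cast hp.out.one_lt
  have hq : q ≠ 0 := by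
    rintro rfl
    have : p ^ j ≤ 1 := Nat.le_of_dvd one_pos h
    have : 2 ≤ p ^ j := by
      calc 2 = 2 ^ 1 := rfl
      _ ≤ 2 ^ j := Nat.pow_le_pow_right (by norm_num) hj
      _ ≤ p ^ j := Nat.pow_le_pow_left hp.out.two_le j
    omega
  have hpden : p ∣ q.den := dvd_trans (dvd_pow_self p (by omega)) h
  have hnum : ¬ (p : ℤ) ∣ q.num := by
    intro hd
    have h1 : p ∣ q.num.natAbs := by simpa using Int.natAbs_dvd_natAbs.2 hd
    have h2 : p ∣ Nat.gcd q.num.natAbs q.den := Nat.dvd_gcd h1 hpden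
    rw [q.reduced] at h2
    exact hp.out.ne_one (Nat.dvd_one.1 h2)
  have hnum1 : ‖((q.num : ℤ) : ℚ_[p])‖ = 1 := by
    refine le_antisymm (Padic.norm_int_le_one _) ?_
    by_contra hlt
    push_neg at hlt
    exact hnum (Padic.norm_intCast_lt_one_iff.1 hlt)
  have hden : ‖((q.den : ℤ) : ℚ_[p])‖ ≤ (p:ℝ) ^ (-(j:ℤ)) := by
    rw [Padic.norm_int_le_pow_iff_dvd]
    exact_mod_cast h
  have hden0 : (0:ℝ) < ‖(((q.den :ℕ)) : ℚ_[p])‖ := by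
    apply norm_pos_iff.2
    exact_mod_cast q.den_pos.ne'
  have hden' : ‖(((q.den : ℕ)) : ℚ_[p])‖ ≤ (p:ℝ) ^ (-(j:ℤ)) := by exact_mod_cast hden
  have hnum1' : ‖((q.num : ℤ) : ℚ_[p])‖ = 1 := hnum1
  rw [Rat.cast_def, norm_div, hnum1']
  rw [le_div_iff₀ hden0]
  calc (p:ℝ) ^ (j:ℤ) * ‖(((q.den:ℕ)) : ℚ_[p])‖ ≤ (p:ℝ) ^ (j:ℤ) * (p:ℝ) ^ (-(j:ℤ)) := by
        apply mul_le_mul_of_nonneg_left hden' (by positivity)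
  _ = 1 := by rw [← zpow_add₀ (by positivity : (p:ℝ) ≠ 0)]; norm_num

lemma one_lt_norm_of_dvd_den {q : ℚ} (h : p ∣ q.den) : 1 < ‖(q : ℚ_[p])‖ := by
  have := le_norm_of_pow_dvd_den (p := p) (q := q) (j := 1) le_rfl (by simpa using h)
  have hp1 : (1 : ℝ) < p := by exact_mod_cast hp.out.one_lt
  calc (1:ℝ) < p := hp1
  _ = (p:ℝ) ^ (1:ℤ) := by norm_num
  _ ≤ _ := this

lemma dvd_den_of_one_lt_norm {q : ℚ} (h : 1 < ‖(q : ℚ_[p])‖) : p ∣ q.den := by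
  by_contra hd
  exact absurd (Padic.norm_rat_le_one hd) (not_le.2 h)

lemma not_pow_dvd_den {q : ℚ} {k : ℕ} (h : ‖(q : ℚ_[p])‖ ≤ (p:ℝ) ^ (k:ℤ)) :
    ¬ p ^ (k+1) ∣ q.den := by
  intro hd
  have h1 := le_norm_of_pow_dvd_den (p := p) (j := k+1) (by omega) hd
  have hp1 : (1 : ℝ) < p := by exact_mod_cast hp.out.one_lt
  have : ((p:ℝ)) ^ ((k:ℤ)+1) ≤ (p:ℝ) ^ (k:ℤ) := by
    calc ((p:ℝ)) ^ ((k:ℤ)+1) = (p:ℝ) ^ (((k+1:ℕ)):ℤ) := by norm_cast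
    _ ≤ ‖(q : ℚ_[p])‖ := h1
    _ ≤ (p:ℝ) ^ (k:ℤ) := h
  have := (zpow_le_zpow_iff_right₀ hp1).1 this
  omega



lemma term_eq (N m i : ℕ) (hi : i < m) :
    bernoulli i * ((m+1).choose i : ℚ) * (N:ℚ) ^ (m+1-i) / ((m:ℚ)+1)
      = (bernoulli i * N) * (m.choose i : ℚ) * ((N:ℚ) ^ (m-i) / ((m-i+1 : ℕ) : ℚ)) := by
  have h1 := Nat.add_one_mul_choose_eq m (m - i)
  rw [Nat.choose_symm (by omega : i ≤ m)] at h1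
  have h3' : (m+1).choose (m-i+1) = (m+1).choose i := by
    rw [show m - i + 1 = (m+1) - i from by omega]
    exact Nat.choose_symm (by omega)
  rw [h3'] at h1
  -- h1 : (m+1) * m.choose i = (m+1).choose i * (m - i + 1)
  have keyQ : ((m:ℚ)+1) * (m.choose i : ℚ) = ((m+1).choose i : ℚ) * ((m-i+1 : ℕ) : ℚ) := by
    exact_mod_cast congrArg (fun x : ℕ => (x : ℚ)) h1
  have hm1 : ((m:ℚ)+1) ≠ 0 := by positivity
  have hmi : ((m-i+1:ℕ):ℚ) ≠ 0 := Nat.cast_ne_zero.2 (by omega)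
  rw [show m+1-i = (m-i)+1 from by omega, pow_succ]
  have hrhs : (bernoulli i * N) * (m.choose i : ℚ) * ((N:ℚ) ^ (m-i) / ((m-i+1 : ℕ) : ℚ))
      = ((bernoulli i * N) * (m.choose i : ℚ) * (N:ℚ) ^ (m-i)) / ((m-i+1 : ℕ) : ℚ) := by
    ring
  rw [hrhs, div_eq_div_iff hm1 hmi]
  linear_combination (-(bernoulli i * (N:ℚ) ^ (m-i) * (N:ℚ))) * keyQ

lemma bernoulli_sub_sum (m : ℕ) (hm : 1 ≤ m) (N : ℕ) :
    (N:ℚ) * bernoulli m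
      = (∑ k ∈ range N, (k:ℚ) ^ m)
        - ∑ i ∈ range m,
            (bernoulli i * N) * (m.choose i : ℚ) * ((N:ℚ) ^ (m-i) / ((m-i+1 : ℕ) : ℚ)) := by
  have h := sum_range_pow N m
  rw [sum_range_succ] at h
  have hlast : bernoulli m * ((m+1).choose m : ℚ) * (N:ℚ) ^ (m+1-m) / ((m:ℚ)+1)
      = (N:ℚ) * bernoulli m := by
    rw [Nat.choose_succ_self_right, show m+1-m = 1 from by omega, pow_one]
    have hm1 : ((m:ℚ)+1) ≠ 0 := by positivity
    push_cast
    field_simp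
  rw [Finset.sum_congr rfl (fun i hi => term_eq N m i (mem_range.1 hi)), hlast] at h
  linarith [h]


lemma norm_sub_le_max (a b : ℚ_[p]) : ‖a - b‖ ≤ max ‖a‖ ‖b‖ := by
  rw [sub_eq_add_neg]
  calc ‖a + -b‖ ≤ max ‖a‖ ‖-b‖ := Padic.nonarchimedean a (-b)
  _ = max ‖a‖ ‖b‖ := by rw [norm_neg]

lemma norm_nat_le_inv_of_dvd {n : ℕ} (h : p ∣ n) : ‖(n : ℚ_[p])‖ ≤ (p:ℝ)⁻¹ := by
  obtain ⟨t, rfl⟩ := h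
  push_cast
  rw [norm_mul, Padic.norm_p]
  have h1 : ‖(t : ℚ_[p])‖ ≤ 1 := norm_nat_le_one t
  have h2 : (0:ℝ) ≤ (p:ℝ)⁻¹ := by positivity
  calc (p:ℝ)⁻¹ * ‖(t : ℚ_[p])‖ ≤ (p:ℝ)⁻¹ * 1 := by
        exact mul_le_mul_of_nonneg_left h1 h2
  _ = (p:ℝ)⁻¹ := mul_one _

lemma norm_p_mul_bernoulli_le (m : ℕ) : ‖(((p:ℚ) * bernoulli m : ℚ) : ℚ_[p])‖ ≤ 1 := by
  induction m using Nat.strong_induction_on with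
  | _ m ih =>
    rcases Nat.eq_zero_or_pos m with rfl | hm
    · rw [bernoulli_zero, mul_one]
      push_cast
      rw [Padic.norm_p]
      exact inv_le_one_of_one_le₀ (by exact_mod_cast hp.out.one_le)
    · have hid := bernoulli_sub_sum m hm p
      rw [hid]
      push_cast
      apply le_trans (norm_sub_le_max _ _)
      apply max_le
      · apply IsUltrametricDist.norm_sum_le_of_forall_le_of_nonneg zero_le_one
        intro k _
        calc ‖((k:ℚ_[p])) ^ m‖ = ‖((k:ℚ_[p]))‖ ^ m := norm_pow _ _
        _ ≤ 1 := pow_le_one₀ (norm_nonneg _) (norm_nat_le_one k)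
      · apply IsUltrametricDist.norm_sum_le_of_forall_le_of_nonneg zero_le_one
        intro i hi
        rw [mem_range] at hi
        rw [norm_mul, norm_mul]
        have h1 : ‖((bernoulli i : ℚ) : ℚ_[p]) * ((p:ℕ) : ℚ_[p])‖ ≤ 1 := by
          have := ih i hi
          rw [show ((p:ℚ) * bernoulli i : ℚ) = (bernoulli i : ℚ) * (p:ℚ) from mul_comm _ _] at this
          push_cast at this
          exact this
        have h2 : ‖((m.choose i : ℕ) : ℚ_[p])‖ ≤ 1 := norm_nat_le_one _
        have h3 : ‖(p:ℚ_[p]) ^ (m-i) / (((m-i : ℕ) : ℚ_[p]) + 1)‖ ≤ 1 := by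
          have := norm_frac_le (p := p) (m-i); push_cast at this; exact this
        calc ‖((bernoulli i:ℚ):ℚ_[p]) * ((p:ℕ):ℚ_[p])‖ * ‖((m.choose i : ℕ):ℚ_[p])‖ *
              ‖(p:ℚ_[p])^(m-i) / (((m-i : ℕ):ℚ_[p]) + 1)‖ ≤ 1 * 1 * 1 := by
              gcongr <;> simp [norm_nonneg]
        _ = 1 := by norm_num

lemma norm_bernoulli_le (m : ℕ) : ‖((bernoulli m : ℚ) : ℚ_[p])‖ ≤ (p:ℝ) ^ (1:ℤ) := by
  have h := norm_p_mul_bernoulli_le (p := p) m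
  push_cast at h
  rw [norm_mul, Padic.norm_p] at h
  have hp0 : (0:ℝ) < (p:ℝ) := by exact_mod_cast hp.out.pos
  rw [inv_mul_le_iff₀ hp0] at h
  simpa using h

lemma not_sq_dvd_den_bernoulli (m : ℕ) : ¬ p ^ 2 ∣ (bernoulli m).den := by
  have := not_pow_dvd_den (p := p) (k := 1) (norm_bernoulli_le m)
  simpa using this

lemma one_lt_norm_bernoulli_even {m : ℕ} (hm2 : 2 ≤ m) (hme : Even m)
    (hS : ¬ p ∣ ∑ k ∈ range p, k ^ m) : 1 < ‖((bernoulli m : ℚ) : ℚ_[p])‖ := by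
  have hm : 1 ≤ m := by omega
  have hp0 : (0:ℝ) < (p:ℝ) := by exact_mod_cast hp.out.pos
  have hpinv : (p:ℝ)⁻¹ < 1 := by
    rw [inv_lt_one_iff₀]; right; exact_mod_cast hp.out.one_lt
  have hid := bernoulli_sub_sum m hm p
  -- the subtracted sum has norm ≤ p⁻¹
  have hT : ‖((∑ i ∈ range m,
      (bernoulli i * p) * (m.choose i : ℚ) * ((p:ℚ) ^ (m-i) / ((m-i+1 : ℕ) : ℚ)) : ℚ) : ℚ_[p])‖
      ≤ (p:ℝ)⁻¹ := by
    push_cast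
    apply IsUltrametricDist.norm_sum_le_of_forall_le_of_nonneg (by positivity)
    intro i hi
    rw [mem_range] at hi
    rw [norm_mul, norm_mul]
    have h1 : ‖((bernoulli i : ℚ) : ℚ_[p]) * ((p:ℕ) : ℚ_[p])‖ ≤ 1 := by
      have := norm_p_mul_bernoulli_le (p := p) i
      rw [show ((p:ℚ) * bernoulli i : ℚ) = (bernoulli i : ℚ) * (p:ℚ) from mul_comm _ _] at this
      push_cast at this
      exact this
    have h2 : ‖((m.choose i : ℕ) : ℚ_[p])‖ ≤ 1 := norm_nat_le_one _
    rcases Nat.lt_or_ge i (m-1) with hi2 | hi2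
    · -- i ≤ m - 2 : the fraction has norm ≤ p⁻¹
      have h3 : ‖(p:ℚ_[p]) ^ (m-i) / (((m-i : ℕ) : ℚ_[p]) + 1)‖ ≤ (p:ℝ)⁻¹ := by
        have := norm_frac_le_inv (p := p) (k := m-i) (by omega) (Or.inl (by omega))
        push_cast at this; exact this
      calc ‖((bernoulli i:ℚ):ℚ_[p]) * ((p:ℕ):ℚ_[p])‖ * ‖((m.choose i : ℕ):ℚ_[p])‖ *
            ‖(p:ℚ_[p])^(m-i) / (((m-i : ℕ):ℚ_[p]) + 1)‖ ≤ 1 * 1 * (p:ℝ)⁻¹ := by gcongr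
      _ = (p:ℝ)⁻¹ := by norm_num
    · -- i = m - 1
      have hieq : i = m - 1 := by omega
      rcases eq_or_ne p 2 with hp2 | hp2
      · -- p = 2 : use that the binomial coefficient C(m, m-1) = m is even
        have hch : m.choose i = m := by
          rw [hieq, show m - 1 = m - 1 from rfl]
          rw [show (m:ℕ) - 1 = m - 1 from rfl]
          have : m.choose (m-1) = m.choose 1 := by
            rw [show m - 1 = m - 1 from rfl, ← Nat.choose_symm (by omega : 1 ≤ m)]
          rw [this, Nat.choose_one_right]
        have h2' : ‖((m.choose i : ℕ) : ℚ_[p])‖ ≤ (p:ℝ)⁻¹ := by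
          rw [hch]
          apply norm_nat_le_inv_of_dvd
          rw [hp2]
          exact hme.two_dvd
        have h3 : ‖(p:ℚ_[p]) ^ (m-i) / (((m-i : ℕ) : ℚ_[p]) + 1)‖ ≤ 1 := by
          have := norm_frac_le (p := p) (m-i); push_cast at this; exact this
        calc ‖((bernoulli i:ℚ):ℚ_[p]) * ((p:ℕ):ℚ_[p])‖ * ‖((m.choose i : ℕ):ℚ_[p])‖ *
              ‖(p:ℚ_[p])^(m-i) / (((m-i : ℕ):ℚ_[p]) + 1)‖ ≤ 1 * (p:ℝ)⁻¹ * 1 := by gcongr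
        _ = (p:ℝ)⁻¹ := by norm_num
      · -- p odd
        have h3 : ‖(p:ℚ_[p]) ^ (m-i) / (((m-i : ℕ) : ℚ_[p]) + 1)‖ ≤ (p:ℝ)⁻¹ := by
          have hp3 : 3 ≤ p := by
            have := hp.out.two_le
            omega
          have := norm_frac_le_inv (p := p) (k := m-i) (by omega) (Or.inr hp3)
          push_cast at this; exact this
        calc ‖((bernoulli i:ℚ):ℚ_[p]) * ((p:ℕ):ℚ_[p])‖ * ‖((m.choose i : ℕ):ℚ_[p])‖ *
              ‖(p:ℚ_[p])^(m-i) / (((m-i : ℕ):ℚ_[p]) + 1)‖ ≤ 1 * 1 * (p:ℝ)⁻¹ := by gcongr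
        _ = (p:ℝ)⁻¹ := by norm_num
  -- S has norm 1
  set S : ℕ := ∑ k ∈ range p, k ^ m with hSdef
  have hSq : (∑ k ∈ range p, (k:ℚ) ^ m) = ((S:ℕ) : ℚ) := by push_cast [hSdef]; rfl
  have hS1 : ‖(((S:ℕ):ℚ) : ℚ_[p])‖ = 1 := by
    have := norm_nat_eq_one_of_not_dvd (p := p) hS
    push_cast
    exact this
  -- ‖p * B_m‖ = 1
  have hPB : ‖(((p:ℚ) * bernoulli m : ℚ) : ℚ_[p])‖ = 1 := by
    rw [hid, hSq]
    rw [show (((S:ℕ):ℚ) - _ : ℚ) = (((S:ℕ):ℚ)) + -(∑ i ∈ range m,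
      (bernoulli i * p) * (m.choose i : ℚ) * ((p:ℚ) ^ (m-i) / ((m-i+1 : ℕ) : ℚ))) from by ring]
    rw [Rat.cast_add, Rat.cast_neg]
    rw [Padic.add_eq_max_of_ne]
    · rw [norm_neg, hS1]
      apply max_eq_left
      exact le_trans hT (le_of_lt hpinv)
    · rw [norm_neg, hS1]
      intro hcon
      exact absurd (hcon ▸ hT) (not_le.2 hpinv)
  -- conclude
  have : ‖((bernoulli m : ℚ) : ℚ_[p])‖ = (p:ℝ) := by
    have h := hPB
    push_cast at h
    rw [norm_mul, Padic.norm_p] at h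
    rw [inv_mul_eq_one₀ (by positivity : (p:ℝ) ≠ 0)] at h
    exact h.symm
  rw [this]
  exact_mod_cast hp.out.one_lt

lemma not_dvd_sum_pow_card_sub_one : ¬ p ∣ ∑ k ∈ range p, k ^ (p - 1) := by
  haveI : NeZero p := ⟨hp.out.pos.ne'⟩
  haveI : Fact (1 < p) := ⟨hp.out.one_lt⟩
  intro hdvd
  have hcast : ((∑ k ∈ range p, k ^ (p-1) : ℕ) : ZMod p) = 0 :=
    (ZMod.natCast_eq_zero_iff _ _).2 hdvd
  push_cast at hcast
  have hbij : ∑ k ∈ range p, ((k : ZMod p))^(p-1) = ∑ x : ZMod p, x^(p-1) := by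
    refine Finset.sum_nbij' (fun k => (k : ZMod p)) (fun x => x.val) ?_ ?_ ?_ ?_ ?_
    · intro a _; exact Finset.mem_univ _
    · intro a _; rw [Finset.mem_range]; exact ZMod.val_lt a
    · intro a ha; rw [Finset.mem_range] at ha; exact ZMod.val_cast_of_lt ha
    · intro a _; exact ZMod.natCast_rightInverse a
    · intro a _; rfl
  rw [hbij] at hcast
  have hsplit : ∑ x : ZMod p, x^(p-1)
      = (0:ZMod p)^(p-1) + ∑ x ∈ Finset.univ.erase (0 : ZMod p), x^(p-1) :=
    (Finset.add_sum_erase _ _ (Finset.mem_univ _)).symm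
  have hones : ∑ x ∈ Finset.univ.erase (0 : ZMod p), x^(p-1)
      = ∑ _x ∈ Finset.univ.erase (0 : ZMod p), (1 : ZMod p) := by
    apply Finset.sum_congr rfl
    intro x hx
    exact ZMod.pow_card_sub_one_eq_one (Finset.ne_of_mem_erase hx)
  have hcard : (Finset.univ.erase (0 : ZMod p)).card = p - 1 := by
    rw [Finset.card_erase_of_mem (Finset.mem_univ _), Finset.card_univ, ZMod.card]
  rw [hsplit, hones, Finset.sum_const, hcard, zero_pow (by have := hp.out.one_lt; omega),
    zero_add, nsmul_eq_mul, mul_one] at hcast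
  have : ((p - 1 : ℕ) : ZMod p) = -1 := by
    rw [Nat.cast_sub hp.out.one_le, ZMod.natCast_self, Nat.cast_one, zero_sub]
  rw [this] at hcast
  exact (neg_ne_zero.2 one_ne_zero) hcast

lemma dvd_den_bernoulli_even {m : ℕ} (hm2 : 2 ≤ m) (hme : Even m)
    (hS : ¬ p ∣ ∑ k ∈ range p, k ^ m) : p ∣ (bernoulli m).den :=
  dvd_den_of_one_lt_norm (one_lt_norm_bernoulli_even hm2 hme hS)

lemma two_dvd_den_bernoulli {m : ℕ} (hm2 : 2 ≤ m) (hme : Even m) :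
    2 ∣ (bernoulli m).den := by
  haveI : Fact (Nat.Prime 2) := ⟨Nat.prime_two⟩
  apply dvd_den_bernoulli_even hm2 hme
  have h1 : ∑ k ∈ range 2, k ^ m = 1 := by
    rw [Finset.sum_range_succ, Finset.sum_range_one, zero_pow (by omega : m ≠ 0), one_pow,
      zero_add]
  rw [h1]
  omega

lemma self_dvd_den_bernoulli : p ∣ (bernoulli (p-1)).den := by
  rcases eq_or_ne p 2 with hp2 | hp2
  · subst hp2
    rw [show (2:ℕ) - 1 = 1 from rfl, bernoulli_one]
    norm_num
  · have hodd : Odd p := hp.out.odd_of_ne_two hp2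
    have hp3 : 3 ≤ p := by have := hp.out.two_le; rcases hodd with ⟨k, hk⟩; omega
    apply dvd_den_bernoulli_even (m := p - 1) (by omega) ?_ ?_
    · rcases hodd with ⟨k, hk⟩
      exact ⟨k, by omega⟩
    · exact not_dvd_sum_pow_card_sub_one

lemma not_dvd_choose {m : ℕ} (hdvd : p ∣ m + 1) (hpm : p ≤ m) :
    ¬ p ∣ m.choose (p-1) := by
  haveI : NeZero p := ⟨hp.out.pos.ne'⟩
  intro hcon
  have hid := Nat.descFactorial_eq_factorial_mul_choose m (p-1)
  -- cast to ZMod p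
  have hcast : ((m.descFactorial (p-1) : ℕ) : ZMod p)
      = ((p-1).factorial : ZMod p) * ((m.choose (p-1) : ℕ) : ZMod p) := by
    exact_mod_cast congrArg (fun x : ℕ => (x : ZMod p)) hid
  have hchoose0 : ((m.choose (p-1) : ℕ) : ZMod p) = 0 :=
    (ZMod.natCast_eq_zero_iff _ _).2 hcon
  rw [hchoose0, mul_zero] at hcast
  -- compute descFactorial in ZMod p
  have hm1 : ((m : ℕ) : ZMod p) = -1 := by
    have : ((m + 1 : ℕ) : ZMod p) = 0 := (ZMod.natCast_eq_zero_iff _ _).2 hdvd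
    push_cast at this
    linear_combination this
  have hdesc : ((m.descFactorial (p-1) : ℕ) : ZMod p)
      = (((p-1).factorial : ℕ) : ZMod p) := by
    rw [Nat.descFactorial_eq_prod_range, ← Nat.descFactorial_self (p-1),
      Nat.descFactorial_eq_prod_range]
    push_cast [Finset.prod_natCast]  -- may need adjusting
    apply Finset.prod_congr rfl
    intro i hi
    rw [Finset.mem_range] at hi
    have hile : i ≤ m := by omega
    have hile2 : i ≤ p - 1 := by omega
    rw [Nat.cast_sub hile, Nat.cast_sub hile2, hm1]
    have : ((p - 1 : ℕ) : ZMod p) = -1 := by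
      rw [Nat.cast_sub hp.out.one_le, ZMod.natCast_self, Nat.cast_one, zero_sub]
    rw [this]
  rw [hdesc] at hcast
  -- (p-1)! ≠ 0 in ZMod p
  have hfacne : (((p-1).factorial : ℕ) : ZMod p) ≠ 0 := by
    rw [Ne, ZMod.natCast_eq_zero_iff]
    intro hdf
    have h1 := (Nat.Prime.dvd_factorial hp.out).1 hdf
    have h2 := hp.out.two_le
    omega
  exact hfacne hcast



lemma den_natCast_mul_eq_one_iff {d : ℕ} (hd : 0 < d) (q : ℚ) :
    ((d:ℚ) * q).den = 1 ↔ q.den ∣ d := by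
  constructor
  · intro h
    have hq : ((((d:ℚ) * q).num : ℤ) : ℚ) = (d:ℚ) * q := (Rat.den_eq_one_iff _).1 h
    have hdne : (d:ℚ) ≠ 0 := Nat.cast_ne_zero.2 (by omega)
    have hq2 : q = ((((d:ℚ) * q).num : ℤ) : ℚ) / ((d : ℤ) : ℚ) := by
      rw [hq]
      push_cast
      field_simp
    have hq3 : q = Rat.divInt (((d:ℚ) * q).num) (d : ℤ) := by
      rw [Rat.divInt_eq_div]; exact hq2
    have hdvd : (q.den : ℤ) ∣ (d : ℤ) := by rw [hq3]; exact Rat.den_dvd _ _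
    exact_mod_cast hdvd
  · rintro ⟨c, rfl⟩
    have h0 : (q.den : ℚ) ≠ 0 := Nat.cast_ne_zero.2 q.den_pos.ne'
    have hq : q * (q.den : ℚ) = (q.num : ℚ) := ((div_eq_iff h0).1 (Rat.num_div_den q)).symm
    have hcalc : ((q.den * c : ℕ) : ℚ) * q = ((q.num * (c:ℤ) : ℤ) : ℚ) := by
      push_cast
      linear_combination (c : ℚ) * hq
    rw [hcalc, Rat.den_intCast]

lemma isIntPoly_natCast_smul_iff (f : Polynomial ℚ) {d : ℕ} (hd : 0 < d) :
    IsIntPoly ((d : ℚ) • f) ↔ ∀ i, (f.coeff i).den ∣ d := by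
  unfold IsIntPoly
  constructor
  · intro h i
    have := h i
    rw [Polynomial.coeff_smul, smul_eq_mul] at this
    exact (den_natCast_mul_eq_one_iff hd _).1 this
  · intro h i
    rw [Polynomial.coeff_smul, smul_eq_mul]
    exact (den_natCast_mul_eq_one_iff hd _).2 (h i)

/-- The lcm of the coefficient denominators. -/
noncomputable def L (f : Polynomial ℚ) : ℕ := f.support.lcm fun i => (f.coeff i).den

lemma L_pos (f : Polynomial ℚ) : 0 < L f := by
  rcases Nat.eq_zero_or_pos (L f) with h | h
  · exfalso
    have := Finset.lcm_eq_zero_iff.1 h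
    obtain ⟨i, _, hi⟩ := this
    exact (f.coeff i).den_pos.ne' hi
  · exact h

lemma den_dvd_L (f : Polynomial ℚ) (i : ℕ) : (f.coeff i).den ∣ L f := by
  by_cases hi : i ∈ f.support
  · exact Finset.dvd_lcm hi
  · rw [Polynomial.notMem_support_iff.1 hi]
    exact one_dvd _

lemma L_dvd_iff (f : Polynomial ℚ) (d : ℕ) : L f ∣ d ↔ ∀ i, (f.coeff i).den ∣ d := by
  constructor
  · intro h i
    exact dvd_trans (den_dvd_L f i) h
  · intro h
    exact Finset.lcm_dvd fun i _ => h i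

lemma polyDenom_eq_L (f : Polynomial ℚ) : polyDenom f = L f := by
  have hset : {d : ℕ | 0 < d ∧ IsIntPoly ((d : ℚ) • f)} = {d : ℕ | 0 < d ∧ L f ∣ d} := by
    ext d
    simp only [Set.mem_setOf_eq]
    constructor
    · rintro ⟨hd, h⟩
      exact ⟨hd, (L_dvd_iff f d).2 ((isIntPoly_natCast_smul_iff f hd).1 h)⟩
    · rintro ⟨hd, h⟩
      exact ⟨hd, (isIntPoly_natCast_smul_iff f hd).2 ((L_dvd_iff f d).1 h)⟩
  unfold polyDenom
  rw [hset]
  have hmem : L f ∈ {d : ℕ | 0 < d ∧ L f ∣ d} := ⟨L_pos f, dvd_rfl⟩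
  apply le_antisymm (Nat.sInf_le hmem)
  have := Nat.sInf_mem (s := {d : ℕ | 0 < d ∧ L f ∣ d}) ⟨L f, hmem⟩
  exact Nat.le_of_dvd this.1 this.2

lemma polyDenom_dvd_iff (f : Polynomial ℚ) {d : ℕ} (hd : 0 < d) :
    polyDenom f ∣ d ↔ IsIntPoly ((d : ℚ) • f) := by
  rw [polyDenom_eq_L, L_dvd_iff, isIntPoly_natCast_smul_iff f hd]

lemma dvd_polyDenom_of_dvd_den {f : Polynomial ℚ} {n i : ℕ} (h : n ∣ (f.coeff i).den) :
    n ∣ polyDenom f := by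
  rw [polyDenom_eq_L]
  exact dvd_trans h (den_dvd_L f i)

lemma not_sq_dvd_lcm {ι : Type*} {p : ℕ} (hp : p.Prime) (s : Finset ι) (g : ι → ℕ)
    (hg : ∀ i ∈ s, g i ≠ 0) (H : ∀ i ∈ s, ¬ p ^ 2 ∣ g i) :
    s.lcm g ≠ 0 ∧ ¬ p ^ 2 ∣ s.lcm g := by
  classical
  induction s using Finset.induction_on with
  | empty =>
    refine ⟨by simp, ?_⟩
    simp only [Finset.lcm_empty]
    intro hdvd
    have := Nat.le_of_dvd one_pos hdvd
    have := hp.two_le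
    nlinarith [this]
  | insert a s hnotmem ih =>
    have ih' := ih (fun i hi => hg i (Finset.mem_insert_of_mem hi))
      (fun i hi => H i (Finset.mem_insert_of_mem hi))
    rw [Finset.lcm_insert, lcm_eq_nat_lcm]
    have ha : g a ≠ 0 := hg a (Finset.mem_insert_self a s)
    have hL : s.lcm g ≠ 0 := ih'.1
    constructor
    · exact Nat.lcm_ne_zero ha hL
    · intro hdvd
      rw [Nat.Prime.pow_dvd_iff_le_factorization hp (Nat.lcm_ne_zero ha hL),
        Nat.factorization_lcm ha hL] at hdvd
      simp only [Finsupp.sup_apply] at hdvd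
      rcases le_max_iff.1 hdvd with h | h
      · exact H a (Finset.mem_insert_self a s)
          ((Nat.Prime.pow_dvd_iff_le_factorization hp ha).2 h)
      · exact ih'.2 ((Nat.Prime.pow_dvd_iff_le_factorization hp hL).2 h)

lemma not_sq_dvd_polyDenom {f : Polynomial ℚ} {p : ℕ} (hp : p.Prime)
    (H : ∀ i, ¬ p ^ 2 ∣ (f.coeff i).den) : ¬ p ^ 2 ∣ polyDenom f := by
  rw [polyDenom_eq_L]
  exact (not_sq_dvd_lcm hp f.support _ (fun i _ => (f.coeff i).den_pos.ne')
    (fun i _ => H i)).2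

lemma rad_dvd (n : ℕ) : rad n ∣ n := Nat.prod_primeFactors_dvd n

lemma dvd_rad_of_squarefree {d n : ℕ} (hd : Squarefree d) (hdvd : d ∣ n) (hn : n ≠ 0) :
    d ∣ rad n := by
  have h1 : ∏ p ∈ d.primeFactors, p = d := Nat.prod_primeFactors_of_squarefree hd
  have h2 : d.primeFactors ⊆ n.primeFactors := Nat.primeFactors_mono hdvd hn
  calc d = ∏ p ∈ d.primeFactors, p := h1.symm
  _ ∣ ∏ p ∈ n.primeFactors, p := Finset.prod_dvd_prod_of_subset _ _ _ h2
  _ = rad n := rfl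

lemma rad_dvd_of_primes {n D : ℕ} (h : ∀ q ∈ n.primeFactors, q ∣ D) : rad n ∣ D :=
  Finset.prod_primes_dvd D (fun q hq => (Nat.prime_of_mem_primeFactors hq).prime) h


lemma coeff_bernoulli_poly {n j : ℕ} (hj : j ≤ n) :
    (Polynomial.bernoulli n).coeff (n - j) = _root_.bernoulli j * (n.choose j : ℚ) := by
  rw [Polynomial.bernoulli, Polynomial.finset_sum_coeff]
  rw [Finset.sum_eq_single j]
  · rw [Polynomial.coeff_monomial, if_pos rfl]
  · intro b hb hbj
    rw [Finset.mem_range] at hb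
    rw [Polynomial.coeff_monomial, if_neg (by omega)]
  · intro hj'
    exact absurd (Finset.mem_range.2 (by omega)) hj'

lemma coeff_bernoulli_poly_of_lt {n i : ℕ} (hi : n < i) :
    (Polynomial.bernoulli n).coeff i = 0 := by
  rw [Polynomial.bernoulli, Polynomial.finset_sum_coeff]
  apply Finset.sum_eq_zero
  intro j hj
  rw [Finset.mem_range] at hj
  rw [Polynomial.coeff_monomial, if_neg (by omega)]

lemma not_sq_dvd_den_coeff {p : ℕ} [hp : Fact p.Prime] (n i : ℕ) :
    ¬ p ^ 2 ∣ ((Polynomial.bernoulli n).coeff i).den := by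
  rcases le_or_gt i n with hi | hi
  · have hcoeff : (Polynomial.bernoulli n).coeff i
        = _root_.bernoulli (n - i) * ((n.choose (n-i) : ℕ) : ℚ) := by
      have h0 := coeff_bernoulli_poly (n := n) (j := n - i) (by omega)
      rw [show n - (n - i) = i from by omega] at h0
      exact h0
    rw [hcoeff]
    have hnorm : ‖((_root_.bernoulli (n-i) * ((n.choose (n-i) : ℕ) : ℚ) : ℚ) : ℚ_[p])‖
        ≤ (p:ℝ) ^ ((1:ℕ):ℤ) := by
      push_cast
      rw [norm_mul]
      calc ‖((_root_.bernoulli (n-i) : ℚ) : ℚ_[p])‖ * ‖(((n.choose (n-i)) : ℕ) : ℚ_[p])‖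
          ≤ (p:ℝ) ^ (1:ℤ) * 1 :=
            mul_le_mul (norm_bernoulli_le _) (norm_nat_le_one _) (norm_nonneg _) (by positivity)
      _ = (p:ℝ) ^ ((1:ℕ):ℤ) := by norm_num
    have := not_pow_dvd_den (p := p) (k := 1) hnorm
    simpa using this
  · rw [coeff_bernoulli_poly_of_lt hi]
    intro hdvd
    have h1 : (0:ℚ).den = 1 := rfl
    rw [h1] at hdvd
    have h2 := Nat.le_of_dvd one_pos hdvd
    have h3 := hp.out.two_le
    nlinarith

lemma prime_dvd_polyDenom_bernoulli {p : ℕ} [hp : Fact p.Prime] {m : ℕ}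
    (hdvd : p ∣ m + 1) (hpm : p ≤ m) :
    p ∣ polyDenom (Polynomial.bernoulli m) := by
  apply dvd_polyDenom_of_dvd_den (i := m - (p-1))
  rw [coeff_bernoulli_poly (show p - 1 ≤ m by omega)]
  apply dvd_den_of_one_lt_norm
  push_cast
  rw [norm_mul]
  have h1 : 1 < ‖((_root_.bernoulli (p-1) : ℚ) : ℚ_[p])‖ :=
    one_lt_norm_of_dvd_den self_dvd_den_bernoulli
  have h2 : ‖((m.choose (p-1) : ℕ) : ℚ_[p])‖ = 1 :=
    norm_nat_eq_one_of_not_dvd (not_dvd_choose hdvd hpm)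
  rw [h2, mul_one]
  exact h1

end S16

/-- If the set of odd `n ≥ 1` with `D n = rad (n+1)` equals
`{3, 5, 9, 11, 27, 29, 35, 59}`, then `{n ≥ 1 : B'_n(x) ∈ ℤ[x]}` equals
`{1, 2, 4, 6, 10, 12, 28, 30, 36, 60}`; in particular, it is finite. -/
theorem stmt_16
    (h : {n : ℕ | 1 ≤ n ∧ Odd n ∧ D n = rad (n + 1)} =
      ({3, 5, 9, 11, 27, 29, 35, 59} : Set ℕ)) :
    {n : ℕ | 1 ≤ n ∧ IsIntPoly (Polynomial.derivative (Polynomial.bernoulli n))} =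
      ({1, 2, 4, 6, 10, 12, 28, 30, 36, 60} : Set ℕ) ∧
    Set.Finite {n : ℕ | 1 ≤ n ∧
      IsIntPoly (Polynomial.derivative (Polynomial.bernoulli n))} := by
  have key : {n : ℕ | 1 ≤ n ∧ IsIntPoly (Polynomial.derivative (Polynomial.bernoulli n))}
      = ({1, 2, 4, 6, 10, 12, 28, 30, 36, 60} : Set ℕ) := by
    ext n
    simp only [Set.mem_setOf_eq, Set.mem_insert_iff, Set.mem_singleton_iff]
    constructor
    · rintro ⟨hn1, hint⟩
      rw [Polynomial.derivative_bernoulli] at hint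
      set m := n - 1 with hmdef
      have hii : IsIntPoly ((n:ℚ) • Polynomial.bernoulli m) := by
        intro i
        have h0 := hint i
        rw [← Polynomial.C_eq_natCast, Polynomial.coeff_C_mul] at h0
        rw [Polynomial.coeff_smul, smul_eq_mul]
        exact h0
      rcases Nat.even_or_odd n with hne | hno
      · -- n even
        rcases eq_or_ne n 2 with rfl | hn2
        · right; left; rfl
        · have hn4 : 4 ≤ n := by
            rcases hne with ⟨k, hk⟩; omega
          have hmodd : Odd m := by rcases hne with ⟨k, hk⟩; exact ⟨k - 1, by omega⟩
          have hm3 : 3 ≤ m := by omega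
          have hBm : _root_.bernoulli m = 0 := by
            rw [bernoulli_eq_bernoulli'_of_ne_one (by omega)]
            exact bernoulli'_eq_zero_of_odd hmodd (by omega)
          have hDm : D m = polyDenom (Polynomial.bernoulli m) := by
            unfold D
            rw [hBm, map_zero, sub_zero]
          have hdvd : D m ∣ n := by
            rw [hDm]
            exact (S16.polyDenom_dvd_iff _ (by omega : 0 < n)).2 hii
          have hnp : ¬ n.Prime := by
            intro hnp
            rcases (Nat.Prime.eq_one_or_self_of_dvd hnp 2 hne.two_dvd) with h2 | h2 <;> omega
          have hradD : rad n ∣ D m := by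
            apply S16.rad_dvd_of_primes
            intro q hq
            have hqp : q.Prime := Nat.prime_of_mem_primeFactors hq
            have hqn : q ∣ n := Nat.dvd_of_mem_primeFactors hq
            haveI : Fact q.Prime := ⟨hqp⟩
            have hqm : q ≤ m := by
              have h1 : q ≤ n := Nat.le_of_dvd (by omega) hqn
              have h2 : q ≠ n := by
                rintro rfl
                exact hnp hqp
              omega
            rw [hDm]
            exact S16.prime_dvd_polyDenom_bernoulli (by rwa [show m + 1 = n from by omega]) hqm
          have hsq : Squarefree (D m) := by
            rw [Nat.squarefree_iff_prime_squarefree]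
            intro q hqp hcon
            haveI : Fact q.Prime := ⟨hqp⟩
            rw [hDm, ← pow_two] at hcon
            exact S16.not_sq_dvd_polyDenom hqp (fun i => S16.not_sq_dvd_den_coeff m i) hcon
          have hDrad : D m = rad n :=
            Nat.dvd_antisymm (S16.dvd_rad_of_squarefree hsq hdvd (by omega)) hradD
          have hmem : m ∈ {k : ℕ | 1 ≤ k ∧ Odd k ∧ D k = rad (k + 1)} :=
            ⟨by omega, hmodd, by rw [show m + 1 = n from by omega]; exact hDrad⟩
          rw [h] at hmem
          simp only [Set.mem_insert_iff, Set.mem_singleton_iff] at hmem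
          omega
      · -- n odd
        rcases eq_or_ne n 1 with rfl | hn1'
        · left; rfl
        · exfalso
          have hm2 : 2 ≤ m := by
            rcases hno with ⟨k, hk⟩; omega
          have hmeven : Even m := by rcases hno with ⟨k, hk⟩; exact ⟨k, by omega⟩
          have h2den : 2 ∣ (_root_.bernoulli m).den := S16.two_dvd_den_bernoulli hm2 hmeven
          have hc0 : (Polynomial.bernoulli m).coeff 0 = _root_.bernoulli m := by
            have h0 := S16.coeff_bernoulli_poly (n := m) (j := m) le_rfl
            rw [show m - m = 0 from by omega, Nat.choose_self] at h0
            rw [h0]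
            norm_num
          have := hii 0
          rw [Polynomial.coeff_smul, smul_eq_mul, hc0,
            S16.den_natCast_mul_eq_one_iff (by omega : 0 < n)] at this
          have h2n : 2 ∣ n := dvd_trans h2den this
          rcases hno with ⟨k, hk⟩
          omega
    · intro hn
      have hn1 : 1 ≤ n := by omega
      refine ⟨hn1, ?_⟩
      rw [Polynomial.derivative_bernoulli]
      have hsuff : IsIntPoly ((n:ℚ) • Polynomial.bernoulli (n-1)) → IsIntPoly
          ((n : Polynomial ℚ) * Polynomial.bernoulli (n-1)) := by
        intro hs i
        have := hs i
        rw [Polynomial.coeff_smul, smul_eq_mul] at this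
        rw [← Polynomial.C_eq_natCast, Polynomial.coeff_C_mul]
        exact this
      apply hsuff
      rcases eq_or_ne n 1 with rfl | hne1
      · intro i
        rw [Polynomial.coeff_smul, smul_eq_mul, show (1:ℕ) - 1 = 0 from rfl,
          Polynomial.bernoulli_zero, Polynomial.coeff_one]
        rcases eq_or_ne i 0 with rfl | hi
        · simp
        · simp [hi]
      · rcases eq_or_ne n 2 with rfl | hne2
        · intro i
          rw [Polynomial.coeff_smul, smul_eq_mul, show (2:ℕ) - 1 = 1 from rfl]
          match i with
          | 0 =>
            have h0 := S16.coeff_bernoulli_poly (n := 1) (j := 1) le_rfl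
            rw [show 1 - 1 = 0 from rfl] at h0
            rw [h0, bernoulli_one]
            norm_num
          | 1 =>
            have h0 := S16.coeff_bernoulli_poly (n := 1) (j := 0) (by omega)
            rw [show 1 - 0 = 1 from rfl] at h0
            rw [h0, bernoulli_zero]
            norm_num
          | (j+2) =>
            rw [S16.coeff_bernoulli_poly_of_lt (by omega)]
            norm_num
        · -- n ∈ {4, 6, 10, 12, 28, 30, 36, 60}
          set m := n - 1 with hmdef
          have hmem : m ∈ ({3, 5, 9, 11, 27, 29, 35, 59} : Set ℕ) := by
            simp only [Set.mem_insert_iff, Set.mem_singleton_iff]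
            omega
          rw [← h] at hmem
          obtain ⟨hm1, hmodd, hDrad⟩ := hmem
          have hm3 : 3 ≤ m := by
            rcases hmodd with ⟨k, hk⟩
            rcases Nat.lt_or_ge m 3 with h3 | h3
            · interval_cases m <;> omega
            · exact h3
          have hBm : _root_.bernoulli m = 0 := by
            rw [bernoulli_eq_bernoulli'_of_ne_one (by omega)]
            exact bernoulli'_eq_zero_of_odd hmodd (by omega)
          have hDm : D m = polyDenom (Polynomial.bernoulli m) := by
            unfold D
            rw [hBm, map_zero, sub_zero]
          have hdvd : polyDenom (Polynomial.bernoulli m) ∣ n := by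
            rw [← hDm, hDrad, show m + 1 = n from by omega]
            exact S16.rad_dvd n
          exact (S16.polyDenom_dvd_iff _ (by omega : 0 < n)).1 hdvd
  refine ⟨key, ?_⟩
  rw [key]
  repeat' apply Set.Finite.insert
  exact Set.finite_singleton _
end
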